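/- PMC \ PCS ≠ ∅; that is, there is an indexed family that is PMC-learnable but not PCS-learnable. -/

import Mathlib

/-!
Common framework: indexed families of c.e. sets, enumerations (texts),
learning machines with run-time, membership-oracle machines, teachers,
and the learning criteria PRT/PSD/PMC/PCS with oracle/teacher variants.
-/

namespace TeachLearn

attribute [local instance] Classical.propDecidable

/-- The initial segment (finite string) of length `n` of the infinite sequence `f`. -/
def str (f : ℕ → ℕ) (n : ℕ) : List ℕ := (List.range n).map f

/-- `f` is an enumeration (a text) of the set `A`: its set of values is exactly `A`. -/
def IsEnum (f : ℕ → ℕ) (A : Set ℕ) : Prop := Set.range f = A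

/-- An indexed family: a uniformly computably enumerable sequence of nonempty
subsets of `ℕ`. -/
structure IndexedFamily where
  F : ℕ → Set ℕ
  nonempty : ∀ n, (F n).Nonempty
  uce : REPred fun p : ℕ × ℕ => p.1 ∈ F p.2

namespace IndexedFamily

/-- `A` is a member of the indexed family `𝓕`. -/
def Mem (𝓕 : IndexedFamily) (A : Set ℕ) : Prop := ∃ n, 𝓕.F n = A

/-- The minimal index of `A` in the indexed family `𝓕`. -/
noncomputable def mi (𝓕 : IndexedFamily) (A : Set ℕ) : ℕ := sInf {n | 𝓕.F n = A}

end IndexedFamily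

/-- A learning machine: a partial computable map from finite strings to
hypotheses, together with a (cumulative) run-time function.  The run-time is
defined exactly when the machine halts, dominates the length of the input read
as well as the size of the output produced, and is monotone along prefixes
(time is accumulated while reading an enumeration). -/
structure Machine where
  eval : List ℕ →. ℕ
  partrec : Partrec eval
  time : List ℕ →. ℕ
  time_dom : ∀ σ, (time σ).Dom ↔ (eval σ).Dom
  length_le_time : ∀ ⦃σ t⦄, t ∈ time σ → σ.length ≤ t
  size_le_time : ∀ ⦃σ t h⦄, t ∈ time σ → h ∈ eval σ → Nat.size h ≤ t
  time_mono : ∀ ⦃σ τ s t⦄, σ <+: τ → s ∈ time σ → t ∈ time τ → s ≤ t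

/-- A teacher: a computable, prefix-monotone map on finite strings whose
output consists of elements of its input. -/
structure Teacher where
  t : List ℕ → List ℕ
  computable : Computable t
  mono : ∀ ⦃σ τ⦄, σ <+: τ → t σ <+: t τ
  content_sub : ∀ ⦃σ x⦄, x ∈ t σ → x ∈ σ

/-- A learning machine with access to a membership oracle, modeled
interactively: `step (σ, ans)` is the machine's action on input string `σ`
after having received the list `ans` of oracle answers so far; an even value
`2 * q` asks the oracle whether `q` belongs to the target, while an odd value
`2 * h + 1` halts the interaction with hypothesis `h`.  The run-time dominates
the length of the input read, the number of oracle queries asked, and the size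
of the value produced, and is monotone (cumulative). -/
structure OMachine where
  step : List ℕ × List Bool →. ℕ
  partrec : Partrec step
  time : List ℕ × List Bool →. ℕ
  time_dom : ∀ x, (time x).Dom ↔ (step x).Dom
  length_le_time : ∀ ⦃x t⦄, t ∈ time x → x.1.length ≤ t
  queries_le_time : ∀ ⦃x t⦄, t ∈ time x → x.2.length ≤ t
  size_le_time : ∀ ⦃x t v⦄, t ∈ time x → v ∈ step x → Nat.size v ≤ t
  time_mono : ∀ ⦃σ τ a b s t⦄, σ <+: τ → a <+: b →
    s ∈ time (σ, a) → t ∈ time (τ, b) → s ≤ t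

namespace OMachine

/-- The answer lists reachable in the interaction of the machine `M` with the
membership oracle for `A` on the input string `σ`. -/
inductive Reach (M : OMachine) (A : Set ℕ) (σ : List ℕ) : List Bool → Prop
  | nil : Reach M A σ []
  | query {ans q} : Reach M A σ ans → (2 * q) ∈ M.step (σ, ans) →
      Reach M A σ (ans ++ [decide (q ∈ A)])

/-- `M.Out A σ h ans`: on input `σ`, interacting with the membership oracle
for `A`, the machine `M` receives the oracle answers `ans` and halts with
hypothesis `h`. -/
def Out (M : OMachine) (A : Set ℕ) (σ : List ℕ) (h : ℕ) (ans : List Bool) : Prop :=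
  M.Reach A σ ans ∧ (2 * h + 1) ∈ M.step (σ, ans)

/-- With oracle `A`, on the stage inputs `I`, the machine `M` outputs the
hypothesis `h` from stage `n` onwards. -/
def Settles (M : OMachine) (A : Set ℕ) (I : ℕ → List ℕ) (h n : ℕ) : Prop :=
  ∀ m, n ≤ m → ∃ ans, M.Out A (I m) h ans

end OMachine

/-- A teacher for the teacher-and-oracle model: it additionally has access to
the oracle answers received so far by the learner. -/
structure OTeacher where
  t : List ℕ → List Bool → List ℕ
  computable : Computable₂ t
  mono : ∀ ⦃σ τ a b⦄, σ <+: τ → a <+: b → t σ a <+: t τ b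
  content_sub : ∀ ⦃σ a x⦄, x ∈ t σ a → x ∈ σ

/-- On the stage inputs `I`, the machine `M` outputs the hypothesis `h` from
stage `n` onwards. -/
def Machine.Settles (M : Machine) (I : ℕ → List ℕ) (h n : ℕ) : Prop :=
  ∀ m, n ≤ m → M.eval (I m) = Part.some h

/-- Settling for the teacher-and-oracle model: `hist m` records the oracle
answers the learner received at stage `m - 1`, which the teacher sees at
stage `m`.  From stage `n` on, the learner outputs `h`. -/
def OMachine.TOSettles (M : OMachine) (T : OTeacher) (A : Set ℕ) (f : ℕ → ℕ)
    (hist : ℕ → List Bool) (h n : ℕ) : Prop :=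
  ∀ m, n ≤ m → M.Out A (T.t (str f m) (hist m)) h (hist (m + 1))

/-! ### Polynomial run-time (PRT) -/

/-- `M` converges to the hypothesis `h` on the stage inputs `I` within fewer
than `B` computation steps. -/
def Machine.PRTIdentifies (M : Machine) (I : ℕ → List ℕ) (h B : ℕ) : Prop :=
  ∃ n, M.Settles I h n ∧ ∃ t, t ∈ M.time (I n) ∧ t < B

/-- Oracle version of `Machine.PRTIdentifies`; the run-time bound also bounds
the oracle use (by `queries_le_time`). -/
def OMachine.PRTIdentifies (M : OMachine) (A : Set ℕ) (I : ℕ → List ℕ) (h B : ℕ) : Prop :=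
  ∃ n, M.Settles A I h n ∧
    ∃ ans t, M.Out A (I n) h ans ∧ t ∈ M.time (I n, ans) ∧ t < B

/-- `M` PRT-learns `𝓕` with polynomial bound `p`. -/
def PRTLearnsWith (M : Machine) (p : Polynomial ℕ) (𝓕 : IndexedFamily) : Prop :=
  ∀ A, 𝓕.Mem A → ∀ f, IsEnum f A →
    ∃ h, 𝓕.F h = A ∧ M.PRTIdentifies (str f) h (p.eval (𝓕.mi A))

/-- `𝓕` is PRT-learnable. -/
def PRT (𝓕 : IndexedFamily) : Prop := ∃ M p, PRTLearnsWith M p 𝓕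

/-- The learner-teacher pair `(M, T)` PRT-learns `𝓕` with polynomial bound `p`. -/
def PRTTLearnsWith (M : Machine) (T : Teacher) (p : Polynomial ℕ) (𝓕 : IndexedFamily) : Prop :=
  ∀ A, 𝓕.Mem A → ∀ f, IsEnum f A →
    ∃ h, 𝓕.F h = A ∧ M.PRTIdentifies (fun m => T.t (str f m)) h (p.eval (𝓕.mi A))

/-- `𝓕` is PRT[T]-learnable. -/
def PRTT (𝓕 : IndexedFamily) : Prop := ∃ M T p, PRTTLearnsWith M T p 𝓕

/-- `𝓕` is PRT[O]-learnable. -/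
def PRTO (𝓕 : IndexedFamily) : Prop :=
  ∃ (M : OMachine) (p : Polynomial ℕ), ∀ A, 𝓕.Mem A → ∀ f, IsEnum f A →
    ∃ h, 𝓕.F h = A ∧ M.PRTIdentifies A (str f) h (p.eval (𝓕.mi A))

/-- `𝓕` is PRT[T,O]-learnable. -/
def PRTTO (𝓕 : IndexedFamily) : Prop :=
  ∃ (M : OMachine) (T : OTeacher) (p : Polynomial ℕ),
    ∀ A, 𝓕.Mem A → ∀ f, IsEnum f A →
      ∃ h, 𝓕.F h = A ∧ ∃ hist : ℕ → List Bool, hist 0 = [] ∧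
        ∃ n, M.TOSettles T A f hist h n ∧
          ∃ t, t ∈ M.time (T.t (str f n) (hist n), hist (n + 1)) ∧ t < p.eval (𝓕.mi A)

/-! ### Polynomial size dataset (PSD) -/

/-- `M` converges to `h` on an initial stage whose input contains fewer than
`B` distinct elements. -/
def Machine.PSDIdentifies (M : Machine) (I : ℕ → List ℕ) (h B : ℕ) : Prop :=
  ∃ n, M.Settles I h n ∧ (I n).toFinset.card < B

/-- Oracle version of `Machine.PSDIdentifies`; the oracle use is also bounded. -/
def OMachine.PSDIdentifies (M : OMachine) (A : Set ℕ) (I : ℕ → List ℕ) (h B : ℕ) : Prop :=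
  ∃ n, M.Settles A I h n ∧ (I n).toFinset.card < B ∧
    ∃ ans, M.Out A (I n) h ans ∧ ans.length ≤ B

/-- `𝓕` is PSD-learnable. -/
def PSD (𝓕 : IndexedFamily) : Prop :=
  ∃ (M : Machine) (p : Polynomial ℕ), ∀ A, 𝓕.Mem A → ∀ f, IsEnum f A →
    ∃ h, 𝓕.F h = A ∧ M.PSDIdentifies (str f) h (p.eval (𝓕.mi A))

/-- `𝓕` is PSD[T]-learnable. -/
def PSDT (𝓕 : IndexedFamily) : Prop :=
  ∃ (M : Machine) (T : Teacher) (p : Polynomial ℕ), ∀ A, 𝓕.Mem A → ∀ f, IsEnum f A →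
    ∃ h, 𝓕.F h = A ∧ M.PSDIdentifies (fun m => T.t (str f m)) h (p.eval (𝓕.mi A))

/-- `𝓕` is PSD[O]-learnable. -/
def PSDO (𝓕 : IndexedFamily) : Prop :=
  ∃ (M : OMachine) (p : Polynomial ℕ), ∀ A, 𝓕.Mem A → ∀ f, IsEnum f A →
    ∃ h, 𝓕.F h = A ∧ M.PSDIdentifies A (str f) h (p.eval (𝓕.mi A))

/-- `𝓕` is PSD[T,O]-learnable. -/
def PSDTO (𝓕 : IndexedFamily) : Prop :=
  ∃ (M : OMachine) (T : OTeacher) (p : Polynomial ℕ),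
    ∀ A, 𝓕.Mem A → ∀ f, IsEnum f A →
      ∃ h, 𝓕.F h = A ∧ ∃ hist : ℕ → List Bool, hist 0 = [] ∧
        ∃ n, M.TOSettles T A f hist h n ∧
          (T.t (str f n) (hist n)).toFinset.card < p.eval (𝓕.mi A) ∧
          (hist (n + 1)).length ≤ p.eval (𝓕.mi A)

/-! ### Polynomial mind-changes (PMC) -/

/-- The set of positions at which the hypothesis stream `g` changes its mind. -/
def MindChanges (g : ℕ → ℕ) : Set ℕ := {i | g i ≠ g (i + 1)}

/-- The hypothesis stream `g` changes its mind at most `B` times, and the only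
hypothesis appearing infinitely often in it is an index of `A` in `𝓕`. -/
def PMCCriterion (𝓕 : IndexedFamily) (A : Set ℕ) (g : ℕ → ℕ) (B : ℕ) : Prop :=
  (MindChanges g).Finite ∧ (MindChanges g).ncard ≤ B ∧
    ∀ h, {i | g i = h}.Infinite → 𝓕.F h = A

/-- `𝓕` is PMC-learnable. -/
def PMC (𝓕 : IndexedFamily) : Prop :=
  ∃ (M : Machine) (p : Polynomial ℕ), ∀ A, 𝓕.Mem A → ∀ f, IsEnum f A →
    ∃ g : ℕ → ℕ, (∀ m, M.eval (str f m) = Part.some (g m)) ∧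
      PMCCriterion 𝓕 A g (p.eval (𝓕.mi A))

/-- `𝓕` is PMC[T]-learnable. -/
def PMCT (𝓕 : IndexedFamily) : Prop :=
  ∃ (M : Machine) (T : Teacher) (p : Polynomial ℕ), ∀ A, 𝓕.Mem A → ∀ f, IsEnum f A →
    ∃ g : ℕ → ℕ, (∀ m, M.eval (T.t (str f m)) = Part.some (g m)) ∧
      PMCCriterion 𝓕 A g (p.eval (𝓕.mi A))

/-- `𝓕` is PMC[O]-learnable. -/
def PMCO (𝓕 : IndexedFamily) : Prop :=
  ∃ (M : OMachine) (p : Polynomial ℕ), ∀ A, 𝓕.Mem A → ∀ f, IsEnum f A →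
    ∃ g : ℕ → ℕ,
      (∀ m, ∃ ans, M.Out A (str f m) (g m) ans ∧ ans.length ≤ p.eval (𝓕.mi A)) ∧
      PMCCriterion 𝓕 A g (p.eval (𝓕.mi A))

/-- `𝓕` is PMC[T,O]-learnable. -/
def PMCTO (𝓕 : IndexedFamily) : Prop :=
  ∃ (M : OMachine) (T : OTeacher) (p : Polynomial ℕ),
    ∀ A, 𝓕.Mem A → ∀ f, IsEnum f A →
      ∃ hist : ℕ → List Bool, hist 0 = [] ∧
        ∃ g : ℕ → ℕ,
          (∀ m, M.Out A (T.t (str f m) (hist m)) (g m) (hist (m + 1)) ∧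
            (hist (m + 1)).length ≤ p.eval (𝓕.mi A)) ∧
          PMCCriterion 𝓕 A g (p.eval (𝓕.mi A))

/-! ### Polynomial size characteristic sample (PCS) -/

/-- `𝓕` is PCS-learnable: there are a machine, a polynomial bound and an
assignment of a characteristic sample to each member of `𝓕`. -/
def PCS (𝓕 : IndexedFamily) : Prop :=
  ∃ (M : Machine) (p : Polynomial ℕ) (S : Set ℕ → Finset ℕ),
    ∀ A, 𝓕.Mem A → ↑(S A) ⊆ A ∧ (S A).card < p.eval (𝓕.mi A) ∧
      ∃ e, 𝓕.F e = A ∧ ∀ f, IsEnum f A → ∀ n, (∀ x ∈ S A, x ∈ str f n) →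
        M.eval (str f n) = Part.some e

/-- `𝓕` is PCS[O]-learnable. -/
def PCSO (𝓕 : IndexedFamily) : Prop :=
  ∃ (M : OMachine) (p : Polynomial ℕ) (S : Set ℕ → Finset ℕ),
    ∀ A, 𝓕.Mem A → ↑(S A) ⊆ A ∧ (S A).card < p.eval (𝓕.mi A) ∧
      ∃ e, 𝓕.F e = A ∧ ∀ f, IsEnum f A → ∀ n, (∀ x ∈ S A, x ∈ str f n) →
        ∃ ans, M.Out A (str f n) e ans ∧ ans.length ≤ p.eval (𝓕.mi A)

/-- `𝓕` is PCS[T]-learnable: the characteristic sample must eventually appear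
in the teacher's output stream, after which the learner locks onto a correct
index. -/
def PCST (𝓕 : IndexedFamily) : Prop :=
  ∃ (M : Machine) (T : Teacher) (p : Polynomial ℕ) (S : Set ℕ → Finset ℕ),
    ∀ A, 𝓕.Mem A → ↑(S A) ⊆ A ∧ (S A).card < p.eval (𝓕.mi A) ∧
      ∃ e, 𝓕.F e = A ∧ ∀ f, IsEnum f A →
        (∃ n, ∀ x ∈ S A, x ∈ T.t (str f n)) ∧
        ∀ n, (∀ x ∈ S A, x ∈ T.t (str f n)) → M.eval (T.t (str f n)) = Part.some e

/-- `𝓕` is PCS[T,O]-learnable. -/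
def PCSTO (𝓕 : IndexedFamily) : Prop :=
  ∃ (M : OMachine) (T : OTeacher) (p : Polynomial ℕ) (S : Set ℕ → Finset ℕ),
    ∀ A, 𝓕.Mem A → ↑(S A) ⊆ A ∧ (S A).card < p.eval (𝓕.mi A) ∧
      ∃ e, 𝓕.F e = A ∧ ∀ f, IsEnum f A →
        ∃ hist : ℕ → List Bool, hist 0 = [] ∧
          (∃ n, ∀ x ∈ S A, x ∈ T.t (str f n) (hist n)) ∧
          ∀ n, (∀ x ∈ S A, x ∈ T.t (str f n) (hist n)) →
            M.Out A (T.t (str f n) (hist n)) e (hist (n + 1)) ∧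
            (hist (n + 1)).length ≤ p.eval (𝓕.mi A)


/-! ### Auxiliary development for stmt18 -/

open Asymptotics Filter in
lemma TL_exists_le_two_pow (c k : ℕ) : ∃ n : ℕ, c * (n + 1) ^ k ≤ 2 ^ n := by
  have h := isLittleO_pow_const_const_pow_of_one_lt (R := ℝ) k (r := 2) one_lt_two
  have hpos : (0:ℝ) < 1 / ((c + 1) * 2 ^ k) := by positivity
  have h2 := h.def hpos
  rw [eventually_atTop] at h2
  obtain ⟨N, hN⟩ := h2
  refine ⟨max N 1, ?_⟩
  have hn := hN (max N 1) (le_max_left _ _)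
  set n := max N 1 with hn1
  have h1n : (1:ℕ) ≤ n := le_max_right _ _
  have key : (c : ℝ) * (n + 1) ^ k ≤ 2 ^ n := by
    have hnn : ((n:ℝ) + 1) ^ k ≤ 2 ^ k * (n:ℝ) ^ k := by
      rw [← mul_pow]
      apply pow_le_pow_left₀ (by positivity)
      have : (1:ℝ) ≤ (n:ℝ) := by exact_mod_cast h1n
      linarith
    have hb : ‖(n:ℝ) ^ k‖ ≤ 1 / ((c + 1) * 2 ^ k) * ‖(2:ℝ) ^ n‖ := hn
    rw [Real.norm_eq_abs, Real.norm_eq_abs, abs_of_nonneg (by positivity),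
      abs_of_nonneg (by positivity)] at hb
    have h3 : (c:ℝ) * (2 ^ k * (n:ℝ) ^ k) ≤ (c:ℝ) * (2 ^ k * (1 / ((c + 1) * 2 ^ k) * 2 ^ n)) := by
      have := mul_le_mul_of_nonneg_left hb (by positivity : (0:ℝ) ≤ 2 ^ k)
      exact mul_le_mul_of_nonneg_left this (by positivity)
    calc (c : ℝ) * (n + 1) ^ k ≤ (c:ℝ) * (2 ^ k * (n:ℝ) ^ k) :=
          mul_le_mul_of_nonneg_left hnn (by positivity)
      _ ≤ (c:ℝ) * (2 ^ k * (1 / ((c + 1) * 2 ^ k) * 2 ^ n)) := h3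
      _ = (c / (c+1)) * 2 ^ n := by field_simp
      _ ≤ 1 * 2 ^ n := by
          apply mul_le_mul_of_nonneg_right _ (by positivity)
          rw [div_le_one (by positivity)]; linarith
      _ = 2 ^ n := one_mul _
  exact_mod_cast key

lemma TL_antitone_changes {u : ℕ → ℕ} (hu : ∀ m, u (m+1) ≤ u m) :
    {m | u m ≠ u (m+1)}.Finite ∧ {m | u m ≠ u (m+1)}.ncard ≤ u 0 := by
  have hmono : ∀ {a b : ℕ}, a ≤ b → u b ≤ u a := by
    intro a b h
    induction h with
    | refl => exact le_refl _
    | step _ ih => exact le_trans (hu _) ih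
  set S := {m | u m ≠ u (m+1)} with hS
  have hdrop : ∀ m ∈ S, u (m+1) < u m := fun m hm =>
    lt_of_le_of_ne (hu m) (Ne.symm hm)
  have hinj : Set.InjOn (fun m => u (m+1)) S := by
    intro a ha b hb hab
    by_contra hne
    simp only [] at hab
    rcases Nat.lt_or_ge a b with h | h
    · have : u (b+1) < u (a+1) := lt_of_lt_of_le (hdrop b hb) (hmono h)
      omega
    · have hba : b < a := lt_of_le_of_ne h (fun e => hne e.symm)
      have : u (a+1) < u (b+1) := lt_of_lt_of_le (hdrop a ha) (hmono hba)
      omega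
  have himg : (fun m => u (m+1)) '' S ⊆ Set.Iio (u 0) := by
    rintro _ ⟨m, hm, rfl⟩
    exact lt_of_lt_of_le (hdrop m hm) (hmono (Nat.zero_le m))
  have hfinimg : ((fun m => u (m+1)) '' S).Finite := (Set.finite_Iio _).subset himg
  have hfin : S.Finite := Set.Finite.of_finite_image hfinimg hinj
  refine ⟨hfin, ?_⟩
  have h1 : S.ncard = ((fun m => u (m+1)) '' S).ncard := (Set.ncard_image_of_injOn hinj).symm
  have h2 : ((fun m => u (m+1)) '' S).ncard ≤ (Set.Iio (u 0)).ncard :=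
    Set.ncard_le_ncard himg (Set.finite_Iio _)
  have h3 : (Set.Iio (u 0)).ncard = u 0 := by
    rw [← Finset.coe_Iio, Set.ncard_coe_finset, Nat.card_Iio]
  omega

/-- Monotonicity of polynomial evaluation over ℕ. -/
lemma TL_poly_eval_mono (p : Polynomial ℕ) {a b : ℕ} (h : a ≤ b) : p.eval a ≤ p.eval b := by
  rw [Polynomial.eval_eq_sum_range, Polynomial.eval_eq_sum_range]
  apply Finset.sum_le_sum
  intro i _
  exact Nat.mul_le_mul_left _ (Nat.pow_le_pow_left h i)

/-- Every ℕ-polynomial is dominated at `x = n² + n` by `2^n` for some `n`. -/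
lemma TL_poly_lt_two_pow (p : Polynomial ℕ) : ∃ n : ℕ, p.eval (n * n + n) ≤ 2 ^ n := by
  set d := p.natDegree
  set c := ∑ i ∈ Finset.range (d + 1), p.coeff i
  obtain ⟨n, hn⟩ := TL_exists_le_two_pow c (2 * d)
  refine ⟨n, le_trans ?_ hn⟩
  have hb : p.eval (n * n + n) ≤ c * (n * n + n + 1) ^ d := by
    rw [Polynomial.eval_eq_sum_range]
    have : ∀ i ∈ Finset.range (d + 1),
        p.coeff i * (n * n + n) ^ i ≤ p.coeff i * (n * n + n + 1) ^ d := by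
      intro i hi
      apply Nat.mul_le_mul_left
      calc (n * n + n) ^ i ≤ (n * n + n + 1) ^ i := Nat.pow_le_pow_left (by omega) i
        _ ≤ (n * n + n + 1) ^ d := Nat.pow_le_pow_right (by omega) (by
            simpa using Nat.lt_succ_iff.mp (Finset.mem_range.mp hi))
    calc ∑ i ∈ Finset.range (d+1), p.coeff i * (n * n + n) ^ i
        ≤ ∑ i ∈ Finset.range (d+1), p.coeff i * (n * n + n + 1) ^ d := Finset.sum_le_sum this
      _ = c * (n * n + n + 1) ^ d := by rw [← Finset.sum_mul]
  refine le_trans hb ?_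
  apply Nat.mul_le_mul_left
  calc (n * n + n + 1) ^ d ≤ ((n + 1) * (n + 1)) ^ d := Nat.pow_le_pow_left (by ring_nf; omega) d
    _ = (n + 1) ^ (2 * d) := by rw [← pow_two, ← pow_mul]


/-! ### The indexed family -/

def FF (k : ℕ) : Set ℕ :=
  {x | x.unpair.1 = k.unpair.1 ∧ x.unpair.2 ≤ 2 ^ k.unpair.1 ∧
       (k.unpair.2 = 0 ∨ x.unpair.2 ≠ (k.unpair.2 - 1) % (2 ^ k.unpair.1 + 1))}

lemma mem_FF {x k : ℕ} : x ∈ FF k ↔ (x.unpair.1 = k.unpair.1 ∧ x.unpair.2 ≤ 2 ^ k.unpair.1 ∧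
       (k.unpair.2 = 0 ∨ x.unpair.2 ≠ (k.unpair.2 - 1) % (2 ^ k.unpair.1 + 1))) := Iff.rfl

lemma mem_FF_pair {n j k : ℕ} : Nat.pair n j ∈ FF k ↔ (n = k.unpair.1 ∧ j ≤ 2 ^ k.unpair.1 ∧
       (k.unpair.2 = 0 ∨ j ≠ (k.unpair.2 - 1) % (2 ^ k.unpair.1 + 1))) := by
  rw [mem_FF, Nat.unpair_pair]

lemma mem_FF' {x m i : ℕ} : x ∈ FF (Nat.pair m i) ↔ (x.unpair.1 = m ∧ x.unpair.2 ≤ 2 ^ m ∧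
       (i = 0 ∨ x.unpair.2 ≠ (i - 1) % (2 ^ m + 1))) := by
  rw [mem_FF, Nat.unpair_pair]

lemma mem_FF_pair' {n j m i : ℕ} : Nat.pair n j ∈ FF (Nat.pair m i) ↔ (n = m ∧ j ≤ 2 ^ m ∧
       (i = 0 ∨ j ≠ (i - 1) % (2 ^ m + 1))) := by
  rw [mem_FF_pair, Nat.unpair_pair]

lemma FF_nonempty (k : ℕ) : (FF k).Nonempty := by
  by_cases h : (k.unpair.2 - 1) % (2 ^ k.unpair.1 + 1) = 0
  · exact ⟨Nat.pair k.unpair.1 1, mem_FF_pair.2 ⟨rfl, Nat.one_le_two_pow, Or.inr (by omega)⟩⟩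
  · exact ⟨Nat.pair k.unpair.1 0, mem_FF_pair.2 ⟨rfl, Nat.zero_le _, Or.inr (by omega)⟩⟩

lemma FF_uce : REPred fun p : ℕ × ℕ => p.1 ∈ FF p.2 := by
  apply ComputablePred.to_re
  rw [ComputablePred.computable_iff]
  have hunp : Primrec (Nat.unpair) := Primrec.unpair
  have hpow : Primrec₂ ((· ^ ·) : ℕ → ℕ → ℕ) := Primrec₂.unpaired'.1 Nat.Primrec.pow
  have h1 : Primrec fun p : ℕ × ℕ => p.1.unpair.1 := (Primrec.fst.comp (hunp.comp Primrec.fst))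
  have h2 : Primrec fun p : ℕ × ℕ => p.1.unpair.2 := (Primrec.snd.comp (hunp.comp Primrec.fst))
  have k1 : Primrec fun p : ℕ × ℕ => p.2.unpair.1 := (Primrec.fst.comp (hunp.comp Primrec.snd))
  have k2 : Primrec fun p : ℕ × ℕ => p.2.unpair.2 := (Primrec.snd.comp (hunp.comp Primrec.snd))
  have hp2 : Primrec fun p : ℕ × ℕ => 2 ^ p.2.unpair.1 := hpow.comp (Primrec.const 2) k1
  refine ⟨fun p => decide (p.1.unpair.1 = p.2.unpair.1) &&
      (decide (p.1.unpair.2 ≤ 2 ^ p.2.unpair.1) &&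
      (decide (p.2.unpair.2 = 0) ||
        !decide (p.1.unpair.2 = (p.2.unpair.2 - 1) % (2 ^ p.2.unpair.1 + 1)))), ?_, ?_⟩
  · apply Primrec.to_comp
    have e1 : PrimrecPred fun p : ℕ × ℕ => p.1.unpair.1 = p.2.unpair.1 := Primrec.eq.comp h1 k1
    have e2 : PrimrecPred fun p : ℕ × ℕ => p.1.unpair.2 ≤ 2 ^ p.2.unpair.1 :=
      Primrec.nat_le.comp h2 hp2
    have e3 : PrimrecPred fun p : ℕ × ℕ => p.2.unpair.2 = 0 := Primrec.eq.comp k2 (Primrec.const 0)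
    have e4 : PrimrecPred fun p : ℕ × ℕ =>
        p.1.unpair.2 = (p.2.unpair.2 - 1) % (2 ^ p.2.unpair.1 + 1) :=
      Primrec.eq.comp h2 (Primrec.nat_mod.comp
        (Primrec.nat_sub.comp k2 (Primrec.const 1))
        (Primrec.succ.comp hp2))
    have := e1.and (e2.and (e3.or e4.not))
    replace this := this.decide
    exact this.of_eq (fun p => by
      simp [Bool.decide_and, Bool.decide_or, decide_not])
  · funext p
    simp [mem_FF]

/-- The indexed family witnessing the separation. -/
def Fam : IndexedFamily where
  F := FF
  nonempty := FF_nonempty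
  uce := FF_uce

/-! ### The learner -/

/-- The list of "missing" coordinates. -/
def missL (n : ℕ) (σ : List ℕ) : List ℕ :=
  (List.range (2 ^ n + 1)).filter (fun i => !decide (Nat.pair n i ∈ σ))

/-- The learner's guessing function. -/
def guess (σ : List ℕ) : ℕ :=
  if σ.length = 0 then 0
  else
    let n := σ.headI.unpair.1
    if (missL n σ).length = 1 then Nat.pair n ((missL n σ).headI + 1) else Nat.pair n 0

lemma primrec_memB : Primrec fun p : ℕ × List ℕ => decide (p.1 ∈ p.2) := by
  have hh : Primrec₂ fun (p : ℕ × List ℕ) (q : ℕ × Bool) => ((q.1 == p.1) || q.2) := by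
    have := Primrec.cond
        (Primrec.beq.comp (Primrec.fst.comp (Primrec.snd (α := ℕ × List ℕ) (β := ℕ × Bool)))
          (Primrec.fst.comp Primrec.fst))
        (Primrec.const true) (Primrec.snd.comp Primrec.snd)
    exact this.of_eq (fun p => by rcases p with ⟨p, q⟩; rcases q with ⟨y, b⟩; cases b <;> simp)
  have h := Primrec.list_foldr (f := fun p : ℕ × List ℕ => p.2) (g := fun _ => false)
      (h := fun (p : ℕ × List ℕ) (q : ℕ × Bool) => ((q.1 == p.1) || q.2))
      Primrec.snd (Primrec.const false) hh
  apply h.of_eq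
  intro ⟨x, σ⟩
  simp only []
  induction σ with
  | nil => simp
  | cons a l ih =>
      simp only [List.foldr_cons, ih, List.mem_cons]
      by_cases hax : x = a
      · simp [hax]
      · have h1 : (a == x) = false := by simp; omega
        simp [h1, hax]

lemma primrec_guess : Primrec guess := by
  have hunp : Primrec (Nat.unpair) := Primrec.unpair
  have hpow : Primrec₂ ((· ^ ·) : ℕ → ℕ → ℕ) := Primrec₂.unpaired'.1 Nat.Primrec.pow
  have hn : Primrec fun σ : List ℕ => σ.headI.unpair.1 :=
    Primrec.fst.comp (hunp.comp Primrec.list_headI)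
  have hmiss : Primrec fun σ : List ℕ => missL σ.headI.unpair.1 σ := by
    have hf : Primrec fun σ : List ℕ => List.range (2 ^ σ.headI.unpair.1 + 1) :=
      Primrec.list_range.comp (Primrec.succ.comp (hpow.comp (Primrec.const 2) hn))
    have hg : Primrec₂ fun (σ : List ℕ) (i : ℕ) =>
        if (Nat.pair σ.headI.unpair.1 i ∈ σ) then (none : Option ℕ) else some i := by
      have hb : Primrec fun p : List ℕ × ℕ => decide (Nat.pair p.1.headI.unpair.1 p.2 ∈ p.1) :=
        primrec_memB.comp (Primrec.pair
          (Primrec₂.natPair.comp (hn.comp Primrec.fst) Primrec.snd) Primrec.fst)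
      have : Primrec fun p : List ℕ × ℕ =>
          if (Nat.pair p.1.headI.unpair.1 p.2 ∈ p.1) then (none : Option ℕ) else some p.2 :=
        (Primrec.cond hb (Primrec.const none) (Primrec.option_some.comp Primrec.snd)).of_eq
          (fun p => by by_cases hm : Nat.pair p.1.headI.unpair.1 p.2 ∈ p.1 <;> simp [hm])
      exact this
    have := Primrec.listFilterMap hf hg
    apply this.of_eq
    intro σ
    simp only [missL]
    induction (List.range (2 ^ σ.headI.unpair.1 + 1)) with
    | nil => simp
    | cons a l ih =>
        by_cases hm : Nat.pair σ.headI.unpair.1 a ∈ σ <;>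
          simp [List.filterMap_cons, List.filter_cons, hm, ih]
  have hlen0 : PrimrecPred fun σ : List ℕ => σ.length = 0 :=
    Primrec.eq.comp Primrec.list_length (Primrec.const 0)
  have hlen1 : PrimrecPred fun σ : List ℕ => (missL σ.headI.unpair.1 σ).length = 1 :=
    Primrec.eq.comp (Primrec.list_length.comp hmiss) (Primrec.const 1)
  have hbranch : Primrec fun σ : List ℕ =>
      if (missL σ.headI.unpair.1 σ).length = 1
      then Nat.pair σ.headI.unpair.1 ((missL σ.headI.unpair.1 σ).headI + 1)
      else Nat.pair σ.headI.unpair.1 0 := by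
    apply Primrec.ite hlen1
    · exact Primrec₂.natPair.comp hn (Primrec.succ.comp (Primrec.list_headI.comp hmiss))
    · exact Primrec₂.natPair.comp hn (Primrec.const 0)
  have := Primrec.ite hlen0 (Primrec.const 0) hbranch
  exact this.of_eq (fun σ => by simp [guess])

/-! ### Machine from a total computable function -/

/-- Cumulative time function. -/
def mtime (g : List ℕ → ℕ) (σ : List ℕ) : ℕ :=
  σ.length + ∑ k ∈ Finset.range (σ.length + 1), Nat.size (g (σ.take k))

def machineOf (g : List ℕ → ℕ) (hg : Computable g) : Machine where
  eval := fun σ => Part.some (g σ)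
  partrec := hg
  time := fun σ => Part.some (mtime g σ)
  time_dom := by intro σ; simp
  length_le_time := by
    intro σ t ht
    rw [Part.mem_some_iff] at ht
    subst ht
    exact Nat.le_add_right _ _
  size_le_time := by
    intro σ t h ht hh
    rw [Part.mem_some_iff] at ht hh
    subst ht; subst hh
    have : Nat.size (g σ) ≤ ∑ k ∈ Finset.range (σ.length + 1), Nat.size (g (σ.take k)) := by
      have := Finset.single_le_sum (f := fun k => Nat.size (g (σ.take k)))
        (fun i _ => Nat.zero_le _) (Finset.self_mem_range_succ σ.length)
      simpa [List.take_length] using this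
    exact le_trans this (Nat.le_add_left _ _)
  time_mono := by
    intro σ τ s t hpre hs ht
    rw [Part.mem_some_iff] at hs ht
    subst hs; subst ht
    unfold mtime
    have hLe : σ.length ≤ τ.length := hpre.length_le
    apply Nat.add_le_add hLe
    have htake : ∀ k, k ≤ σ.length → τ.take k = σ.take k := by
      intro k hk
      obtain ⟨r, rfl⟩ := hpre
      rw [List.take_append_of_le_length hk]
    calc ∑ k ∈ Finset.range (σ.length + 1), Nat.size (g (σ.take k))
        = ∑ k ∈ Finset.range (σ.length + 1), Nat.size (g (τ.take k)) := by
          apply Finset.sum_congr rfl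
          intro k hk
          rw [htake k (by simpa using Nat.lt_succ_iff.mp (Finset.mem_range.mp hk))]
      _ ≤ ∑ k ∈ Finset.range (τ.length + 1), Nat.size (g (τ.take k)) := by
          apply Finset.sum_le_sum_of_subset
          exact Finset.range_subset_range.mpr (by omega)


/-! ### Basic facts about `str` -/

lemma mem_str {f : ℕ → ℕ} {x m : ℕ} : x ∈ str f m ↔ ∃ j < m, f j = x := by
  simp [str, List.mem_map, List.mem_range]

lemma str_length (f : ℕ → ℕ) (m : ℕ) : (str f m).length = m := by simp [str]

lemma str_prefix (f : ℕ → ℕ) {m m' : ℕ} (h : m ≤ m') : str f m <+: str f m' := by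
  have : str f m = (str f m').take m := by
    unfold str
    rw [← List.map_take, List.take_range, min_eq_left h]
  rw [this]
  exact List.take_prefix _ _

lemma headI_str (f : ℕ → ℕ) {m : ℕ} (h : 1 ≤ m) : (str f m).headI = f 0 := by
  obtain ⟨m', rfl⟩ := Nat.exists_eq_add_of_le' h
  simp [str, List.range_succ_eq_map]

lemma str_content {f : ℕ → ℕ} {A : Set ℕ} (hf : IsEnum f A) {x m : ℕ} (hx : x ∈ str f m) :
    x ∈ A := by
  obtain ⟨j, _, rfl⟩ := mem_str.mp hx
  rw [← hf]
  exact ⟨j, rfl⟩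

/-! ### PMC-learnability of `Fam` -/

lemma guess_correct_of_stable {n : ℕ} (σ : List ℕ) (hne : ¬ σ.length = 0)
    (hhead : σ.headI.unpair.1 = n) :
    guess σ = if (missL n σ).length = 1 then Nat.pair n ((missL n σ).headI + 1)
      else Nat.pair n 0 := by
  rw [guess, if_neg hne, hhead]

lemma pmc_Fam : PMC Fam := by
  refine ⟨machineOf guess primrec_guess.to_comp, Polynomial.C 3, ?_⟩
  intro A hA f hf
  obtain ⟨k, hk⟩ := hA
  set n := k.unpair.1 with hn
  set i := k.unpair.2 with hi
  set K := 2 ^ n + 1 with hK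
  have hkk : k = Nat.pair n i := (Nat.pair_unpair k).symm
  have hkA : A = FF (Nat.pair n i) := by rw [← hk, hkk]; rfl
  refine ⟨fun m => guess (str f m), fun m => rfl, ?_⟩
  set g : ℕ → ℕ := fun m => guess (str f m) with hg
  have hAelem : ∀ x ∈ A, x.unpair.1 = n ∧ x.unpair.2 ≤ 2 ^ n := by
    intro x hx
    rw [hkA] at hx
    exact ⟨(mem_FF'.mp hx).1, (mem_FF'.mp hx).2.1⟩
  have hf0 : f 0 ∈ A := by rw [← hf]; exact ⟨0, rfl⟩
  have hhead : ∀ {m : ℕ}, 1 ≤ m → (str f m).headI.unpair.1 = n := by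
    intro m hm
    rw [headI_str f hm]
    exact (hAelem _ hf0).1
  have hAfin : A.Finite := by
    apply Set.Finite.subset ((Set.finite_Iic (2 ^ n)).image (Nat.pair n))
    intro x hx
    exact ⟨x.unpair.2, (hAelem x hx).2, by rw [← (hAelem x hx).1]; exact Nat.pair_unpair x⟩
  have hcov : ∃ N, 1 ≤ N ∧ ∀ x ∈ A, x ∈ str f N := by
    have hex : ∀ x, x ∈ A → ∃ j, f j = x := by
      intro x hx
      rw [← hf] at hx
      exact hx
    set jf : ℕ → ℕ := fun x => if hx : x ∈ A then Nat.find (hex x hx) else 0 with hjf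
    refine ⟨(hAfin.toFinset.sup jf) + 1, le_add_self, ?_⟩
    intro x hx
    rw [mem_str]
    refine ⟨jf x, ?_, ?_⟩
    · have : jf x ≤ hAfin.toFinset.sup jf :=
        Finset.le_sup (f := jf) (by rwa [Set.Finite.mem_toFinset])
      omega
    · rw [hjf]
      simp only [dif_pos hx]
      exact Nat.find_spec (hex x hx)
  obtain ⟨N, hN1, hNcov⟩ := hcov
  have hstab : ∀ {m x : ℕ}, N ≤ m → (x ∈ str f m ↔ x ∈ A) := by
    intro m x hm
    constructor
    · exact str_content hf
    · intro hx
      exact (str_prefix f hm).subset (hNcov x hx)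
  set AM : List ℕ := (List.range K).filter (fun j => !decide (Nat.pair n j ∈ A)) with hAM
  have hmissStab : ∀ {m : ℕ}, N ≤ m → missL n (str f m) = AM := by
    intro m hm
    apply List.filter_congr
    intro j _
    exact congrArg (fun b => !b) (decide_eq_decide.mpr (hstab hm))
  set c : ℕ := if AM.length = 1 then Nat.pair n (AM.headI + 1) else Nat.pair n 0 with hc
  have hgN : ∀ {m : ℕ}, N ≤ m → g m = c := by
    intro m hm
    show guess (str f m) = c
    rw [guess_correct_of_stable (str f m) (by rw [str_length]; omega) (hhead (le_trans hN1 hm)),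
      hmissStab hm]
  have hcor : FF c = A := by
    rcases Nat.eq_zero_or_pos i with hi0 | hipos
    · have hAMnil : AM = [] := by
        rw [hAM, List.filter_eq_nil_iff]
        intro j hj
        simp only [Bool.not_eq_true', decide_eq_false_iff_not, not_not]
        rw [hkA, hi0, mem_FF_pair']
        exact ⟨rfl, by rw [List.mem_range] at hj; omega, Or.inl rfl⟩
      have hc0 : c = Nat.pair n 0 := by
        rw [hc, hAMnil]
        norm_num
      rw [hc0, hkA, hi0]
    · set j0 := i - 1 with hj0def
      have hj0 : i = j0 + 1 := by omega
      rw [hj0] at hkA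
      set r := j0 % K with hr
      have hKpos : 0 < K := by rw [hK]; exact Nat.succ_pos _
      have hrK : r < K := Nat.mod_lt _ hKpos
      have hmemA : ∀ j, Nat.pair n j ∈ A ↔ (j ≤ 2 ^ n ∧ j ≠ r) := by
        intro j
        rw [hkA, mem_FF_pair']
        constructor
        · rintro ⟨-, h1, h2⟩
          rcases h2 with h2 | h2
          · omega
          · exact ⟨h1, by simpa [hr] using h2⟩
        · rintro ⟨h1, h2⟩
          exact ⟨rfl, h1, Or.inr (by simpa [hr] using h2)⟩
      have hAMr : AM = [r] := by
        have hmem : ∀ x, x ∈ AM ↔ x = r := by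
          intro x
          rw [hAM, List.mem_filter, List.mem_range]
          simp only [Bool.not_eq_true', decide_eq_false_iff_not]
          constructor
          · rintro ⟨h1, h2⟩
            rw [hmemA] at h2
            push_neg at h2
            exact h2 (by omega)
          · rintro rfl
            refine ⟨hrK, ?_⟩
            rw [hmemA]
            simp
        have hnd : AM.Nodup := (List.nodup_range (n := K)).filter _
        have hlen : AM.length = 1 := by
          rw [← List.toFinset_card_of_nodup hnd]
          have : AM.toFinset = {r} := by
            ext x
            rw [List.mem_toFinset, Finset.mem_singleton, hmem]
          rw [this, Finset.card_singleton]
        obtain ⟨a, ha⟩ := List.length_eq_one_iff.mp hlen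
        have : a = r := by rw [← hmem a, ha]; simp
        rw [ha, this]
      have hcr : c = Nat.pair n (r + 1) := by
        rw [hc, hAMr]
        norm_num
      rw [hcr, hkA]
      ext x
      rw [mem_FF', mem_FF']
      simp only [Nat.add_sub_cancel]
      have h1 : r % K = r := Nat.mod_eq_of_lt hrK
      rw [h1, ← hr]
      omega
  -- mind-change counting
  set u : ℕ → ℕ := fun m => min (missL n (str f m)).length 2 with hu
  have hmiss_sub : ∀ m, List.Sublist (missL n (str f (m+1))) (missL n (str f m)) := by
    intro m
    apply List.monotone_filter_right
    intro a ha
    simp only [Bool.not_eq_true', decide_eq_false_iff_not] at ha ⊢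
    intro hmem
    exact ha ((str_prefix f (Nat.le_succ m)).subset hmem)
  have hu_anti : ∀ m, u (m+1) ≤ u m := fun m =>
    min_le_min (hmiss_sub m).length_le (le_refl 2)
  obtain ⟨hDfin, hDcard⟩ := TL_antitone_changes hu_anti
  have hMCsub : MindChanges g ⊆ {0} ∪ {m | u m ≠ u (m+1)} := by
    intro m hm
    by_contra hcon
    rw [Set.mem_union] at hcon
    push_neg at hcon
    obtain ⟨hm0, humc⟩ := hcon
    rw [Set.mem_singleton_iff] at hm0
    rw [Set.mem_setOf_eq, not_not] at humc
    have hm1 : 1 ≤ m := by omega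
    apply hm
    show g m = g (m + 1)
    have e1 : g m = if (missL n (str f m)).length = 1
        then Nat.pair n ((missL n (str f m)).headI + 1) else Nat.pair n 0 :=
      guess_correct_of_stable _ (by rw [str_length]; omega) (hhead hm1)
    have e2 : g (m+1) = if (missL n (str f (m+1))).length = 1
        then Nat.pair n ((missL n (str f (m+1))).headI + 1) else Nat.pair n 0 :=
      guess_correct_of_stable _ (by rw [str_length]; omega) (hhead (by omega))
    set a := missL n (str f m)
    set b := missL n (str f (m+1))
    have hba : b.length ≤ a.length := (hmiss_sub m).length_le
    have humc' : min b.length 2 = min a.length 2 := humc.symm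
    rcases Nat.lt_or_ge a.length 2 with hlt | hge
    · have hlen : b.length = a.length := by omega
      rcases Nat.lt_or_ge a.length 1 with h0 | h1'
      · have ha0 : ¬ a.length = 1 := by omega
        have hb0 : ¬ b.length = 1 := by omega
        rw [e1, e2, if_neg ha0, if_neg hb0]
      · have ha1 : a.length = 1 := by omega
        have hb1 : b.length = 1 := by omega
        obtain ⟨x, hx⟩ := List.length_eq_one_iff.mp ha1
        obtain ⟨y, hy⟩ := List.length_eq_one_iff.mp hb1
        have hyb : y ∈ b := by rw [hy]; simp
        have : y ∈ a := (hmiss_sub m).subset hyb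
        rw [hx, List.mem_singleton] at this
        rw [e1, e2, if_pos ha1, if_pos hb1, hx, hy, this]
    · have hbge : 2 ≤ b.length := by omega
      rw [e1, e2, if_neg (by omega), if_neg (by omega)]
  have hMCfin : (MindChanges g).Finite :=
    Set.Finite.subset ((Set.finite_singleton 0).union hDfin) hMCsub
  refine ⟨hMCfin, ?_, ?_⟩
  · have h1 : (MindChanges g).ncard ≤ ({0} ∪ {m | u m ≠ u (m+1)} : Set ℕ).ncard :=
      Set.ncard_le_ncard hMCsub ((Set.finite_singleton 0).union hDfin)
    have h2 : ({0} ∪ {m | u m ≠ u (m+1)} : Set ℕ).ncard ≤ 1 + {m | u m ≠ u (m+1)}.ncard := by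
      have := Set.ncard_union_le ({0} : Set ℕ) {m | u m ≠ u (m+1)}
      simpa using this
    have h3 : u 0 ≤ 2 := min_le_right _ _
    have h4 : (Polynomial.C 3 : Polynomial ℕ).eval (Fam.mi A) = 3 := Polynomial.eval_C
    omega
  · intro h hinf
    obtain ⟨m, hmem, hgt⟩ := hinf.exists_gt N
    have : g m = h := hmem
    rw [hgN (le_of_lt hgt)] at this
    show FF h = A
    rw [← this, hcor]


/-! ### `Fam` is not PCS-learnable -/

lemma str_of_list (f : ℕ → ℕ) (σ : List ℕ)
    (hf : ∀ j (h : j < σ.length), f j = σ.get ⟨j, h⟩) :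
    str f σ.length = σ := by
  apply List.ext_getElem (by rw [str_length])
  intro j h1 h2
  have h3 : (str f σ.length)[j] = f j := by
    simp [str]
  rw [h3, hf j h2]
  rfl

lemma not_pcs_Fam : ¬ PCS Fam := by
  rintro ⟨M, p, S, hS⟩
  obtain ⟨n, hn⟩ := TL_poly_lt_two_pow p
  set K := 2 ^ n + 1 with hK
  have hKpos : 0 < K := by rw [hK]; exact Nat.succ_pos _
  set A := FF (Nat.pair n 0) with hA
  have hApair : ∀ j, Nat.pair n j ∈ A ↔ j ≤ 2 ^ n := by
    intro j
    rw [hA, mem_FF_pair']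
    constructor
    · exact fun h => h.2.1
    · intro h
      exact ⟨rfl, h, Or.inl rfl⟩
  have hAmem : Fam.Mem A := ⟨Nat.pair n 0, rfl⟩
  obtain ⟨hSA_sub, hSA_card, e, he, hLockA⟩ := hS A hAmem
  have hmi : Fam.mi A ≤ Nat.pair n 0 := Nat.sInf_le (by show Fam.F _ = A; rfl)
  have hpn0 : Nat.pair n 0 = n * n + n := by simp [Nat.pair]
  have hcard : (S A).card ≤ 2 ^ n := by
    have h2 : p.eval (Fam.mi A) ≤ p.eval (n * n + n) :=
      TL_poly_eval_mono p (by rw [← hpn0]; exact hmi)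
    omega
  have hex : ∃ i, i ≤ 2 ^ n ∧ Nat.pair n i ∉ S A := by
    by_contra hcon
    push_neg at hcon
    have himg : (Finset.range K).image (Nat.pair n) ⊆ S A := by
      intro x hx
      rw [Finset.mem_image] at hx
      obtain ⟨j, hj, rfl⟩ := hx
      rw [Finset.mem_range] at hj
      exact hcon j (by omega)
    have hinj : Function.Injective (Nat.pair n) := by
      intro a b hab
      have := congrArg (fun x => x.unpair.2) hab
      simpa using this
    have hc1 : ((Finset.range K).image (Nat.pair n)).card = K := by
      rw [Finset.card_image_of_injective _ hinj, Finset.card_range]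
    have hc2 := Finset.card_le_card himg
    omega
  obtain ⟨i, hiu, hinotin⟩ := hex
  set B := FF (Nat.pair n (i + 1)) with hB
  have hiK : i % K = i := Nat.mod_eq_of_lt (by omega)
  have hBpair : ∀ j, Nat.pair n j ∈ B ↔ (j ≤ 2 ^ n ∧ j ≠ i) := by
    intro j
    rw [hB, mem_FF_pair']
    rw [show i + 1 - 1 = i from rfl, hiK]
    constructor
    · rintro ⟨-, h1, h2 | h2⟩
      · omega
      · exact ⟨h1, h2⟩
    · rintro ⟨h1, h2⟩
      exact ⟨rfl, h1, Or.inr h2⟩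
  have hBsubA : B ⊆ A := by
    intro x hx
    have h := mem_FF'.mp (hB ▸ hx)
    rw [hA]
    exact mem_FF'.mpr ⟨h.1, h.2.1, Or.inl rfl⟩
  have hBmem : Fam.Mem B := ⟨Nat.pair n (i + 1), rfl⟩
  obtain ⟨hSB_sub, -, e', he', hLockB⟩ := hS B hBmem
  have hAB : A ≠ B := by
    intro h
    have h1 : Nat.pair n i ∈ A := (hApair i).mpr hiu
    rw [h] at h1
    exact ((hBpair i).mp h1).2 rfl
  have hAform : ∀ x ∈ A, x = Nat.pair n x.unpair.2 ∧ x.unpair.2 ≤ 2 ^ n := by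
    intro x hx
    have h := mem_FF'.mp (hA ▸ hx)
    exact ⟨by rw [← h.1]; exact (Nat.pair_unpair x).symm, h.2.1⟩
  have hBform : ∀ x ∈ B, x = Nat.pair n x.unpair.2 ∧ x.unpair.2 ≤ 2 ^ n ∧ x.unpair.2 ≠ i := by
    intro x hx
    have h := mem_FF'.mp (hB ▸ hx)
    have hx' : x = Nat.pair n x.unpair.2 := by rw [← h.1]; exact (Nat.pair_unpair x).symm
    refine ⟨hx', h.2.1, ?_⟩
    have := (hBpair x.unpair.2).mp (hx' ▸ hx)
    exact this.2
  have hSAB : ∀ x ∈ S A, x ∈ B := by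
    intro x hx
    have hxA : x ∈ A := hSA_sub hx
    obtain ⟨hxf, hxle⟩ := hAform x hxA
    have hxne : x.unpair.2 ≠ i := by
      intro hcon
      apply hinotin
      rw [hcon] at hxf
      rwa [← hxf]
    rw [hxf]
    exact (hBpair _).mpr ⟨hxle, hxne⟩
  set σ0 : List ℕ := (S A).toList ++ (S B).toList with hσ0
  have hσ0B : ∀ x ∈ σ0, x ∈ B := by
    intro x hx
    rcases List.mem_append.mp hx with h | h
    · exact hSAB x (Finset.mem_toList.mp h)
    · exact hSB_sub (Finset.mem_toList.mp h)
  -- an enumeration of A whose initial segment is σ0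
  set fA : ℕ → ℕ := fun j =>
    if h : j < σ0.length then σ0.get ⟨j, h⟩ else Nat.pair n ((j - σ0.length) % K) with hfA
  have hfAstr : str fA σ0.length = σ0 :=
    str_of_list _ _ (fun j h => by rw [hfA]; simp only [dif_pos h])
  have hfAenum : IsEnum fA A := by
    apply Set.eq_of_subset_of_subset
    · rintro x ⟨j, rfl⟩
      by_cases h : j < σ0.length
      · rw [hfA]
        simp only [dif_pos h]
        exact hBsubA (hσ0B _ (σ0.get_mem _))
      · rw [hfA]
        simp only [dif_neg h]
        refine (hApair _).mpr ?_
        have := Nat.mod_lt (j - σ0.length) hKpos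
        omega
    · intro x hx
      obtain ⟨hxf, hxle⟩ := hAform x hx
      refine ⟨σ0.length + x.unpair.2, ?_⟩
      rw [hfA]
      simp only [dif_neg (by omega : ¬ σ0.length + x.unpair.2 < σ0.length)]
      have h4 : σ0.length + x.unpair.2 - σ0.length = x.unpair.2 := by omega
      rw [h4, Nat.mod_eq_of_lt (by omega)]
      exact hxf.symm
  have h1 := hLockA fA hfAenum σ0.length (by
    intro x hx
    rw [hfAstr]
    exact List.mem_append.mpr (Or.inl (Finset.mem_toList.mpr hx)))
  rw [hfAstr] at h1
  -- an enumeration of B whose initial segment is σ0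
  set i0 : ℕ := if i = 0 then 1 else 0 with hi0
  have hi0p : i0 ≤ 2 ^ n ∧ i0 ≠ i := by
    by_cases hip : i = 0
    · rw [hi0, if_pos hip]
      exact ⟨Nat.one_le_two_pow, by omega⟩
    · rw [hi0, if_neg hip]
      exact ⟨Nat.zero_le _, fun h => hip h.symm⟩
  set fB : ℕ → ℕ := fun j =>
    if h : j < σ0.length then σ0.get ⟨j, h⟩
    else Nat.pair n (if (j - σ0.length) % K = i then i0 else (j - σ0.length) % K) with hfB
  have hfBstr : str fB σ0.length = σ0 :=
    str_of_list _ _ (fun j h => by rw [hfB]; simp only [dif_pos h])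
  have hfBenum : IsEnum fB B := by
    apply Set.eq_of_subset_of_subset
    · rintro x ⟨j, rfl⟩
      by_cases h : j < σ0.length
      · rw [hfB]
        simp only [dif_pos h]
        exact hσ0B _ (σ0.get_mem _)
      · rw [hfB]
        simp only [dif_neg h]
        by_cases hr : (j - σ0.length) % K = i
        · rw [if_pos hr]
          exact (hBpair _).mpr hi0p
        · rw [if_neg hr]
          refine (hBpair _).mpr ⟨?_, hr⟩
          have := Nat.mod_lt (j - σ0.length) hKpos
          omega
    · intro x hx
      obtain ⟨hxf, hxle, hxne⟩ := hBform x hx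
      refine ⟨σ0.length + x.unpair.2, ?_⟩
      rw [hfB]
      simp only [dif_neg (by omega : ¬ σ0.length + x.unpair.2 < σ0.length)]
      have h4 : σ0.length + x.unpair.2 - σ0.length = x.unpair.2 := by omega
      rw [h4, Nat.mod_eq_of_lt (by omega), if_neg hxne]
      exact hxf.symm
  have h2 := hLockB fB hfBenum σ0.length (by
    intro x hx
    rw [hfBstr]
    exact List.mem_append.mpr (Or.inr (Finset.mem_toList.mpr hx)))
  rw [hfBstr] at h2
  rw [h1] at h2
  have hee : e = e' := Part.some_inj.mp h2
  exact hAB (by rw [← he, ← he', hee])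


/-- `PMC \ PCS ≠ ∅`. -/
theorem stmt18 : ∃ 𝓕 : IndexedFamily, PMC 𝓕 ∧ ¬ PCS 𝓕 :=
  ⟨Fam, pmc_Fam, not_pcs_Fam⟩

end TeachLearn
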